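/- For any real-valued random variable X with mean μ and variance σ² > 0, and any t ∈ ℝ, the supremum of E[(X−t)₋²] over all distributions with mean μ and variance σ² equals σ² + ((t−μ)₊)². -/

import Mathlib

open MeasureTheory

lemma dirac_integrable (f : ℝ → ℝ) (a : ℝ) : Integrable f (Measure.dirac a) :=
  (integrable_const (f a)).congr (by simp [Filter.EventuallyEq, ae_dirac_eq])

lemma twoPoint_integrable (f : ℝ → ℝ) (a b : ℝ) (q : ℝ) :
    Integrable f ((ENNReal.ofReal q) • Measure.dirac a + (ENNReal.ofReal (1-q)) • Measure.dirac b) :=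
  ((dirac_integrable f a).smul_measure ENNReal.ofReal_ne_top).add_measure
    ((dirac_integrable f b).smul_measure ENNReal.ofReal_ne_top)

lemma twoPoint_integral (f : ℝ → ℝ) (a b : ℝ) (q : ℝ) (hq0 : 0 ≤ q) (hq1 : q ≤ 1) :
    ∫ x, f x ∂((ENNReal.ofReal q) • Measure.dirac a + (ENNReal.ofReal (1-q)) • Measure.dirac b)
      = q * f a + (1-q) * f b := by
  rw [integral_add_measure ((dirac_integrable f a).smul_measure ENNReal.ofReal_ne_top)
    ((dirac_integrable f b).smul_measure ENNReal.ofReal_ne_top),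
    integral_smul_measure, integral_smul_measure, integral_dirac, integral_dirac,
    ENNReal.toReal_ofReal hq0, ENNReal.toReal_ofReal (by linarith)]
  simp only [smul_eq_mul]

lemma twoPoint_prob (a b : ℝ) (q : ℝ) (hq0 : 0 ≤ q) (hq1 : q ≤ 1) :
    IsProbabilityMeasure ((ENNReal.ofReal q) • Measure.dirac a + (ENNReal.ofReal (1-q)) • Measure.dirac b) := by
  constructor
  simp only [Measure.add_apply, Measure.smul_apply, Measure.dirac_apply_of_mem (Set.mem_univ _),
    smul_eq_mul, mul_one]
  rw [← ENNReal.ofReal_add hq0 (by linarith)]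
  norm_num

lemma twoPoint_mem (μ σ t a b q : ℝ) (hq0 : 0 ≤ q) (hq1 : q ≤ 1)
    (hmean : q*a + (1-q)*b = μ) (hsec : q*a^2 + (1-q)*b^2 = μ^2+σ^2) :
    q*(max (t-a) 0)^2 + (1-q)*(max (t-b) 0)^2 ∈
      {y : ℝ | ∃ P : Measure ℝ, IsProbabilityMeasure P ∧ Integrable (fun x => x ^ 2) P ∧
        (∫ x, x ∂P) = μ ∧ (∫ x, x ^ 2 ∂P) = μ ^ 2 + σ ^ 2 ∧
        y = ∫ x, (max (t - x) 0) ^ 2 ∂P} := by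
  refine ⟨(ENNReal.ofReal q) • Measure.dirac a + (ENNReal.ofReal (1-q)) • Measure.dirac b,
    twoPoint_prob a b q hq0 hq1, twoPoint_integrable _ a b q, ?_, ?_, ?_⟩
  · rw [twoPoint_integral (fun x => x) a b q hq0 hq1]; exact hmean
  · rw [twoPoint_integral (fun x => x^2) a b q hq0 hq1]; exact hsec
  · rw [twoPoint_integral (fun x => (max (t-x) 0)^2) a b q hq0 hq1]

lemma family_mem (μ σ t d : ℝ) (hσ : 0 < σ) (hd : 0 < d) :
    (σ^2/(σ^2+d^2))*(max (t-(μ-d)) 0)^2 + (1-σ^2/(σ^2+d^2))*(max (t-(μ+σ^2/d)) 0)^2 ∈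
      {y : ℝ | ∃ P : Measure ℝ, IsProbabilityMeasure P ∧ Integrable (fun x => x ^ 2) P ∧
        (∫ x, x ∂P) = μ ∧ (∫ x, x ^ 2 ∂P) = μ ^ 2 + σ ^ 2 ∧
        y = ∫ x, (max (t - x) 0) ^ 2 ∂P} := by
  have hden : 0 < σ^2 + d^2 := by positivity
  refine twoPoint_mem μ σ t (μ-d) (μ+σ^2/d) (σ^2/(σ^2+d^2))
    (by positivity) ?_ ?_ ?_
  · rw [div_le_one hden]; nlinarith
  · field_simp; ring
  · field_simp; ring

lemma upper_bd (μ σ t : ℝ) (P : Measure ℝ) (hP : IsProbabilityMeasure P)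
    (hi : Integrable (fun x => x^2) P) (h1 : (∫ x, x ∂P) = μ)
    (h2 : (∫ x, x^2 ∂P) = μ^2 + σ^2) :
    (∫ x, (max (t-x) 0)^2 ∂P) ≤ σ^2 + (max (t-μ) 0)^2 := by
  set s := max t μ with hs
  have hx : Integrable (fun x => x) P := by
    have : MemLp (fun x : ℝ => x) 2 P :=
      (memLp_two_iff_integrable_sq aestronglyMeasurable_id).2 hi
    exact this.integrable (by norm_num)
  have hsq : Integrable (fun x => (s-x)^2) P := by
    have he : (fun x : ℝ => (s-x)^2) = fun x => (s^2 - 2*s*x) + x^2 := by funext x; ring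
    rw [he]
    exact ((integrable_const _).sub (hx.const_mul (2*s))).add hi
  have hptwise : ∀ x : ℝ, (max (t-x) 0)^2 ≤ (s-x)^2 := by
    intro x
    have h1' : max (t-x) 0 ≤ |s-x| := by
      refine max_le (le_trans ?_ (le_abs_self _)) (abs_nonneg _)
      have : t ≤ s := le_max_left _ _
      linarith
    calc (max (t-x) 0)^2 ≤ |s-x|^2 := by
          exact pow_le_pow_left₀ (le_max_right _ _) h1' 2
      _ = (s-x)^2 := sq_abs _
  have hmax : Integrable (fun x => (max (t-x) 0)^2) P := by
    refine hsq.mono ?_ (Filter.Eventually.of_forall fun x => ?_)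
    · exact (((measurable_const.sub measurable_id).max measurable_const).pow_const 2).aestronglyMeasurable
    · rw [Real.norm_eq_abs, Real.norm_eq_abs, abs_of_nonneg (by positivity),
        abs_of_nonneg (sq_nonneg _)]
      exact hptwise x
  have hint : (∫ x, (s-x)^2 ∂P) = s^2 - 2*s*μ + (μ^2 + σ^2) := by
    have he : (fun x : ℝ => (s-x)^2) = fun x => (s^2 - 2*s*x) + x^2 := by funext x; ring
    have hia : Integrable (fun x : ℝ => s^2 - 2*s*x) P :=
      (integrable_const _).sub (hx.const_mul (2*s))
    have e1 : (∫ x, ((s^2 - 2*s*x) + x^2) ∂P)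
        = (∫ x, (s^2 - 2*s*x) ∂P) + ∫ x, x^2 ∂P := integral_add hia hi
    have e2 : (∫ x, (s^2 - 2*s*x) ∂P)
        = (∫ _x, (s^2 : ℝ) ∂P) - ∫ x, 2*s*x ∂P :=
      integral_sub (integrable_const _) (hx.const_mul (2*s))
    rw [he, e1, e2, integral_const, integral_const_mul, h1, h2]
    simp
  have hsm : s - μ = max (t-μ) 0 := by
    rw [hs]
    rcases le_total t μ with h | h
    · rw [max_eq_right h, max_eq_right (by linarith)]; ring
    · rw [max_eq_left h, max_eq_left (by linarith)]
  calc (∫ x, (max (t-x) 0)^2 ∂P) ≤ ∫ x, (s-x)^2 ∂P :=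
        integral_mono hmax hsq fun x => hptwise x
    _ = σ^2 + (max (t-μ) 0)^2 := by rw [hint, ← hsm]; ring

theorem stmt_1 (μ σ t : ℝ) (hσ : 0 < σ) :
    sSup {y : ℝ | ∃ P : Measure ℝ, IsProbabilityMeasure P ∧ Integrable (fun x => x ^ 2) P ∧
        (∫ x, x ∂P) = μ ∧ (∫ x, x ^ 2 ∂P) = μ ^ 2 + σ ^ 2 ∧
        y = ∫ x, (max (t - x) 0) ^ 2 ∂P}
      = σ ^ 2 + (max (t - μ) 0) ^ 2 := by
  apply csSup_eq_of_forall_le_of_forall_lt_exists_gt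
  · exact ⟨_, family_mem μ σ t σ hσ hσ⟩
  · rintro y ⟨P, hP, hi, h1, h2, rfl⟩
    exact upper_bd μ σ t P hP hi h1 h2
  · intro w hw
    rcases le_or_gt t μ with hle | hlt
    · have hb : max (t-μ) 0 = 0 := max_eq_right (by linarith)
      rw [hb] at hw
      have hw' : w < σ^2 := by nlinarith
      have hc0 : 0 ≤ μ - t := by linarith
      have hpos : 0 < σ^2 - w := by linarith
      set K : ℝ := σ^4 + 2*(μ-t)*σ^2 with hK
      set d : ℝ := max ((μ-t)+1) (K/(σ^2-w) + 1) with hd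
      have hd1 : (μ-t) + 1 ≤ d := le_max_left _ _
      have hd1' : (1:ℝ) ≤ d := le_trans (by linarith) hd1
      have hd0 : (0:ℝ) < d := by linarith
      have hdK : K < (σ^2 - w)*d := by
        have h2' : K/(σ^2-w) + 1 ≤ d := le_max_right _ _
        have : K/(σ^2-w) < d := by linarith
        calc K = K/(σ^2-w) * (σ^2-w) := by field_simp
          _ < d * (σ^2-w) := by exact mul_lt_mul_of_pos_right this hpos
          _ = (σ^2-w)*d := by ring
      refine ⟨_, family_mem μ σ t d hσ hd0, ?_⟩
      have hm1 : max (t-(μ-d)) 0 = t-μ+d := by rw [max_eq_left (by linarith)]; ring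
      have hm2 : max (t-(μ+σ^2/d)) 0 = 0 := by
        have : 0 < σ^2/d := by positivity
        exact max_eq_right (by linarith)
      rw [hm1, hm2]
      have hden : 0 < σ^2 + d^2 := by positivity
      have key : w * (σ^2 + d^2) < σ^2 * (t-μ+d)^2 := by
        nlinarith [mul_lt_mul_of_pos_right hdK hd0, sq_nonneg (μ-t),
          mul_le_mul_of_nonneg_left hd1' (pow_nonneg hσ.le 4), sq_nonneg σ]
      have : w < σ^2/(σ^2+d^2) * (t-μ+d)^2 := by
        rw [div_mul_eq_mul_div, lt_div_iff₀ hden]; linarith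
      simpa using this
    · have hb : max (t-μ) 0 = t-μ := max_eq_left (by linarith)
      rw [hb] at hw
      have hu0 : 0 < t - μ := by linarith
      set d : ℝ := σ^2/(t-μ) with hd
      have hd0 : 0 < d := by positivity
      refine ⟨_, family_mem μ σ t d hσ hd0, ?_⟩
      have hm1 : max (t-(μ-d)) 0 = (t-μ)+d := by
        rw [max_eq_left (by nlinarith)]; ring
      have hsd : σ^2/d = t-μ := by rw [hd]; field_simp
      have hm2 : max (t-(μ+σ^2/d)) 0 = 0 := by rw [hsd]; simp
      rw [hm1, hm2]
      have hden : 0 < σ^2 + d^2 := by positivity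
      have hval : σ^2/(σ^2+d^2) * ((t-μ)+d)^2 = σ^2 + (t-μ)^2 := by
        rw [hd]; field_simp; ring
      have : w < σ^2/(σ^2+d^2) * ((t-μ)+d)^2 := by rw [hval]; linarith
      simpa using this
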